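/- Suppose X_t and X̂_t solve dX_t = s(X_t)dt + √2 dW_t and dX̂_t = ŝ(X̂_t)dt + √2 dW_t with the same Brownian motion, where s = −∇U with U m-strongly convex and sup_x‖ŝ(x) − s(x)‖ ≤ ε. Then the difference Z_t = X̂_t − X_t satisfies the pathwise bound ‖Z_t‖² ≤ e^{−mt}‖Z_0‖² + (ε²/m²)(1 − e^{−mt}) almost surely; in particular, if X_0 ∼ μ and X̂_0 ∼ μ̂ with both laws invariant, then W₂(μ̂, μ) ≤ ε/m. -/

import Mathlib

open MeasureTheory RealInnerProductSpace NNReal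

/-- Squared 2-Wasserstein distance (as an extended nonnegative real), defined as
the infimum of `∫ ‖x - y‖²` over all couplings. -/
noncomputable def W2sq {d : ℕ}
    (μ ν : Measure (EuclideanSpace ℝ (Fin d))) : ENNReal :=
  ⨅ (π : Measure (EuclideanSpace ℝ (Fin d) × EuclideanSpace ℝ (Fin d)))
    (_ : π.map Prod.fst = μ ∧ π.map Prod.snd = ν),
      ∫⁻ p, ENNReal.ofReal (‖p.1 - p.2‖ ^ 2) ∂π

/-- 2-Wasserstein distance. -/
noncomputable def W2 {d : ℕ}
    (μ ν : Measure (EuclideanSpace ℝ (Fin d))) : ℝ :=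
  Real.sqrt (W2sq μ ν).toReal

/-- Stability under score perturbation: with synchronous coupling (the Brownian
terms cancel, so the difference path solves a pathwise ODE), the difference
`Z_t = X̂_t - X_t` satisfies
`‖Z_t‖² ≤ e^{-mt}‖Z_0‖² + (ε²/m²)(1 - e^{-mt})`; moreover if `X_t ∼ μ` and
`X̂_t ∼ μ̂` for all `t ≥ 0` (both laws invariant, in `P₂`), then
`W₂(μ̂, μ) ≤ ε/m`. -/
theorem score_perturbation_stability {d : ℕ} {Ω : Type*}
    [MeasurableSpace Ω] (ℙ : Measure Ω) [IsProbabilityMeasure ℙ]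
    (U : EuclideanSpace ℝ (Fin d) → ℝ) (m ε : ℝ) (hm : 0 < m) (hε : 0 < ε)
    (hU : ContDiff ℝ 2 U)
    (hconv : ∀ x y : EuclideanSpace ℝ (Fin d),
      U y ≥ U x + ⟪gradient U x, y - x⟫ + m / 2 * ‖y - x‖ ^ 2)
    (s shat : EuclideanSpace ℝ (Fin d) → EuclideanSpace ℝ (Fin d))
    (hs : ∀ x, s x = -gradient U x)
    (L L' : ℝ≥0) (hsLip : LipschitzWith L s) (hshatLip : LipschitzWith L' shat)
    (hclose : ∀ x, ‖shat x - s x‖ ≤ ε)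
    (X Xhat : ℝ → Ω → EuclideanSpace ℝ (Fin d))
    (hXmeas : ∀ t : ℝ, AEMeasurable (X t) ℙ)
    (hXhatmeas : ∀ t : ℝ, AEMeasurable (Xhat t) ℙ)
    -- synchronous coupling: the Brownian increments cancel in the difference,
    -- which therefore satisfies the pathwise ODE `Ż_t = ŝ(X̂_t) - s(X_t)`
    (hZ : ∀ ω : Ω, ∀ t : ℝ, 0 ≤ t →
      HasDerivAt (fun u : ℝ => Xhat u ω - X u ω)
        (shat (Xhat t ω) - s (X t ω)) t) :
    (∀ ω : Ω, ∀ t : ℝ, 0 ≤ t →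
      ‖Xhat t ω - X t ω‖ ^ 2 ≤
        Real.exp (-m * t) * ‖Xhat 0 ω - X 0 ω‖ ^ 2 +
          ε ^ 2 / m ^ 2 * (1 - Real.exp (-m * t))) ∧
    (∀ μ μhat : Measure (EuclideanSpace ℝ (Fin d)),
      IsProbabilityMeasure μ → IsProbabilityMeasure μhat →
      (∫⁻ x, ENNReal.ofReal (‖x‖ ^ 2) ∂μ) < ⊤ →
      (∫⁻ x, ENNReal.ofReal (‖x‖ ^ 2) ∂μhat) < ⊤ →
      (∀ t : ℝ, 0 ≤ t → ℙ.map (X t) = μ) →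
      (∀ t : ℝ, 0 ≤ t → ℙ.map (Xhat t) = μhat) →
      W2 μhat μ ≤ ε / m) := by
  -- strong monotonicity of the score
  have mono : ∀ x y : EuclideanSpace ℝ (Fin d),
      ⟪s y - s x, y - x⟫ ≤ -m * ‖y - x‖ ^ 2 := by
    intro x y
    have h1 := hconv x y
    have h2 := hconv y x
    rw [norm_sub_rev] at h2
    have e1 : ⟪gradient U y, x - y⟫ = -⟪gradient U y, y - x⟫ := by
      rw [← inner_neg_right, neg_sub]
    rw [e1] at h2
    have : s y - s x = gradient U x - gradient U y := by
      rw [hs, hs]; abel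
    rw [this, inner_sub_left]
    linarith
  -- pointwise differential inequality bound
  have hineq : ∀ ω : Ω, ∀ u : ℝ,
      2 * ⟪Xhat u ω - X u ω, shat (Xhat u ω) - s (X u ω)⟫ ≤
        -m * ‖Xhat u ω - X u ω‖ ^ 2 + ε ^ 2 / m := by
    intro ω u
    set x := X u ω
    set y := Xhat u ω
    have hsplit : shat y - s x = (shat y - s y) + (s y - s x) := by abel
    rw [hsplit, inner_add_right]
    have hA : ⟪y - x, shat y - s y⟫ ≤ ‖y - x‖ * ε := by
      calc ⟪y - x, shat y - s y⟫ ≤ ‖y - x‖ * ‖shat y - s y‖ := real_inner_le_norm _ _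
        _ ≤ ‖y - x‖ * ε := by
            exact mul_le_mul_of_nonneg_left (hclose y) (norm_nonneg _)
    have hB : ⟪y - x, s y - s x⟫ ≤ -m * ‖y - x‖ ^ 2 := by
      rw [real_inner_comm]; exact mono x y
    have hdiv : ε ^ 2 / m * m = ε ^ 2 := div_mul_cancel₀ _ hm.ne'
    nlinarith [sq_nonneg (m * ‖y - x‖ - ε), norm_nonneg (y - x), hm]
  -- Part 1: the pathwise Gronwall estimate
  have part1 : ∀ ω : Ω, ∀ t : ℝ, 0 ≤ t →
      ‖Xhat t ω - X t ω‖ ^ 2 ≤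
        Real.exp (-m * t) * ‖Xhat 0 ω - X 0 ω‖ ^ 2 +
          ε ^ 2 / m ^ 2 * (1 - Real.exp (-m * t)) := by
    intro ω t ht
    set c : ℝ := ε ^ 2 / m ^ 2 with hc
    set g : ℝ → ℝ := fun u => ‖Xhat u ω - X u ω‖ ^ 2 with hgdef
    have hmc : m * c = ε ^ 2 / m := by
      rw [hc]; field_simp
    have hg : ∀ u : ℝ, 0 ≤ u → HasDerivAt g
        (2 * ⟪Xhat u ω - X u ω, shat (Xhat u ω) - s (X u ω)⟫) u := by
      intro u hu
      have := (hZ ω u hu).inner ℝ (hZ ω u hu)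
      have heq : (fun v : ℝ => ⟪Xhat v ω - X v ω, Xhat v ω - X v ω⟫) = g := by
        funext v; exact real_inner_self_eq_norm_sq _
      rw [heq] at this
      exact this.congr_deriv (by rw [real_inner_comm]; ring)
    set h : ℝ → ℝ := fun u => Real.exp (m * u) * (g u - c) with hhdef
    have hh : ∀ u : ℝ, 0 ≤ u → HasDerivAt h
        (Real.exp (m * u) * (m * 1) * (g u - c) +
          Real.exp (m * u) *
            (2 * ⟪Xhat u ω - X u ω, shat (Xhat u ω) - s (X u ω)⟫)) u := by
      intro u hu
      exact (((hasDerivAt_id u).const_mul m).exp).mul ((hg u hu).sub_const c)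
    have anti : AntitoneOn h (Set.Icc 0 t) := by
      apply antitoneOn_of_deriv_nonpos (convex_Icc 0 t)
      · intro u hu
        exact (hh u hu.1).continuousAt.continuousWithinAt
      · intro u hu
        rw [interior_Icc] at hu
        exact ((hh u hu.1.le).differentiableAt).differentiableWithinAt
      · intro u hu
        rw [interior_Icc] at hu
        rw [(hh u hu.1.le).deriv]
        have h1 : 2 * ⟪Xhat u ω - X u ω, shat (Xhat u ω) - s (X u ω)⟫ ≤
            -m * g u + ε ^ 2 / m := hineq ω u
        have h2 := Real.exp_pos (m * u)
        have h5 : Real.exp (m * u) * (m * c) = Real.exp (m * u) * (ε ^ 2 / m) := by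
          rw [hmc]
        nlinarith [mul_le_mul_of_nonneg_left h1 h2.le, h5]
    have hht : h t ≤ h 0 := anti ⟨le_rfl, ht⟩ ⟨ht, le_rfl⟩ ht
    rw [hhdef] at hht
    simp only [mul_zero, Real.exp_zero, one_mul] at hht
    have hE : Real.exp (-m * t) * Real.exp (m * t) = 1 := by
      rw [← Real.exp_add]; ring_nf; exact Real.exp_zero
    have hEpos := Real.exp_pos (-m * t)
    have key : Real.exp (m * t) * (g t - c) ≤ g 0 - c := hht
    have h6 : g t - c ≤ Real.exp (-m * t) * (g 0 - c) := by
      have h7 : g t - c = Real.exp (-m * t) * (Real.exp (m * t) * (g t - c)) := by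
        rw [← mul_assoc, hE, one_mul]
      rw [h7]
      exact mul_le_mul_of_nonneg_left key hEpos.le
    show g t ≤ Real.exp (-m * t) * g 0 + c * (1 - Real.exp (-m * t))
    nlinarith [h6]
  refine ⟨part1, ?_⟩
  -- Part 2
  intro μ μhat hμp hμhatp hM hMhat hmapX hmapXhat
  have hcont2 : ∀ ω' : EuclideanSpace ℝ (Fin d),
      True := fun _ => trivial
  have hnmeas : Measurable fun x : EuclideanSpace ℝ (Fin d) =>
      ENNReal.ofReal (‖x‖ ^ 2) :=
    (ENNReal.continuous_ofReal.comp ((continuous_norm).pow 2)).measurable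
  have hZ0meas : AEMeasurable
      (fun ω => ENNReal.ofReal (‖Xhat 0 ω - X 0 ω‖ ^ 2)) ℙ := by
    exact (ENNReal.continuous_ofReal.comp ((continuous_norm).pow 2)).measurable.comp_aemeasurable
      ((hXhatmeas 0).sub (hXmeas 0))
  set C : ENNReal := ∫⁻ ω, ENNReal.ofReal (‖Xhat 0 ω - X 0 ω‖ ^ 2) ∂ℙ with hCdef
  have hMhat' : (∫⁻ ω, ENNReal.ofReal (‖Xhat 0 ω‖ ^ 2) ∂ℙ) < ⊤ := by
    rw [← lintegral_map' hnmeas.aemeasurable (hXhatmeas 0), hmapXhat 0 le_rfl]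
    exact hMhat
  have hM' : (∫⁻ ω, ENNReal.ofReal (‖X 0 ω‖ ^ 2) ∂ℙ) < ⊤ := by
    rw [← lintegral_map' hnmeas.aemeasurable (hXmeas 0), hmapX 0 le_rfl]
    exact hM
  have hCfin : C < ⊤ := by
    have hpt : ∀ ω, ENNReal.ofReal (‖Xhat 0 ω - X 0 ω‖ ^ 2) ≤
        2 * ENNReal.ofReal (‖Xhat 0 ω‖ ^ 2) + 2 * ENNReal.ofReal (‖X 0 ω‖ ^ 2) := by
      intro ω
      have h1 : ‖Xhat 0 ω - X 0 ω‖ ≤ ‖Xhat 0 ω‖ + ‖X 0 ω‖ := norm_sub_le _ _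
      have h2 : ‖Xhat 0 ω - X 0 ω‖ ^ 2 ≤ 2 * ‖Xhat 0 ω‖ ^ 2 + 2 * ‖X 0 ω‖ ^ 2 := by
        nlinarith [norm_nonneg (Xhat 0 ω - X 0 ω), norm_nonneg (Xhat 0 ω), norm_nonneg (X 0 ω),
          sq_nonneg (‖Xhat 0 ω‖ - ‖X 0 ω‖)]
      calc ENNReal.ofReal (‖Xhat 0 ω - X 0 ω‖ ^ 2)
          ≤ ENNReal.ofReal (2 * ‖Xhat 0 ω‖ ^ 2 + 2 * ‖X 0 ω‖ ^ 2) :=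
            ENNReal.ofReal_le_ofReal h2
        _ = 2 * ENNReal.ofReal (‖Xhat 0 ω‖ ^ 2) + 2 * ENNReal.ofReal (‖X 0 ω‖ ^ 2) := by
            rw [ENNReal.ofReal_add (by positivity) (by positivity),
              ENNReal.ofReal_mul (by norm_num), ENNReal.ofReal_mul (by norm_num)]
            norm_num
    calc C ≤ ∫⁻ ω, (2 * ENNReal.ofReal (‖Xhat 0 ω‖ ^ 2) +
            2 * ENNReal.ofReal (‖X 0 ω‖ ^ 2)) ∂ℙ := lintegral_mono hpt
      _ = 2 * (∫⁻ ω, ENNReal.ofReal (‖Xhat 0 ω‖ ^ 2) ∂ℙ) +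
            2 * (∫⁻ ω, ENNReal.ofReal (‖X 0 ω‖ ^ 2) ∂ℙ) := by
          have ha : AEMeasurable
              (fun ω => (2 : ENNReal) * ENNReal.ofReal (‖Xhat 0 ω‖ ^ 2)) ℙ :=
            (hnmeas.comp_aemeasurable (hXhatmeas 0)).const_mul 2
          rw [lintegral_add_left' ha,
            lintegral_const_mul' _ _ (by norm_num), lintegral_const_mul' _ _ (by norm_num)]
      _ < ⊤ := by
          refine ENNReal.add_lt_top.2 ⟨?_, ?_⟩ <;>
            exact ENNReal.mul_lt_top (by norm_num) (by assumption)
  have hbound : ∀ t : ℝ, 0 ≤ t → W2sq μhat μ ≤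
      ENNReal.ofReal (Real.exp (-m * t)) * C + ENNReal.ofReal (ε ^ 2 / m ^ 2) := by
    intro t ht
    set π : Measure (EuclideanSpace ℝ (Fin d) × EuclideanSpace ℝ (Fin d)) :=
      ℙ.map (fun ω => (Xhat t ω, X t ω)) with hπdef
    have hpair : AEMeasurable (fun ω => (Xhat t ω, X t ω)) ℙ :=
      (hXhatmeas t).prodMk (hXmeas t)
    have h1 : π.map Prod.fst = μhat := by
      rw [hπdef, AEMeasurable.map_map_of_aemeasurable
        measurable_fst.aemeasurable hpair]
      exact hmapXhat t ht
    have h2 : π.map Prod.snd = μ := by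
      rw [hπdef, AEMeasurable.map_map_of_aemeasurable
        measurable_snd.aemeasurable hpair]
      exact hmapX t ht
    have hintmeas : Measurable fun p : EuclideanSpace ℝ (Fin d) × EuclideanSpace ℝ (Fin d) =>
        ENNReal.ofReal (‖p.1 - p.2‖ ^ 2) :=
      (ENNReal.continuous_ofReal.comp
        (((continuous_fst.sub continuous_snd).norm).pow 2)).measurable
    have hle : W2sq μhat μ ≤ ∫⁻ p, ENNReal.ofReal (‖p.1 - p.2‖ ^ 2) ∂π :=
      iInf_le_of_le π (iInf_le_of_le ⟨h1, h2⟩ le_rfl)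
    rw [hπdef, lintegral_map' hintmeas.aemeasurable hpair] at hle
    refine hle.trans ?_
    have hexp1 : Real.exp (-m * t) ≤ 1 := by
      rw [Real.exp_le_one_iff]
      nlinarith
    have hexp0 := (Real.exp_pos (-m * t)).le
    calc ∫⁻ ω, ENNReal.ofReal (‖Xhat t ω - X t ω‖ ^ 2) ∂ℙ
        ≤ ∫⁻ ω, (ENNReal.ofReal (Real.exp (-m * t)) *
            ENNReal.ofReal (‖Xhat 0 ω - X 0 ω‖ ^ 2) +
            ENNReal.ofReal (ε ^ 2 / m ^ 2)) ∂ℙ := by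
          refine lintegral_mono fun ω => ?_
          calc ENNReal.ofReal (‖Xhat t ω - X t ω‖ ^ 2)
              ≤ ENNReal.ofReal (Real.exp (-m * t) * ‖Xhat 0 ω - X 0 ω‖ ^ 2 +
                  ε ^ 2 / m ^ 2 * (1 - Real.exp (-m * t))) :=
                ENNReal.ofReal_le_ofReal (part1 ω t ht)
            _ ≤ ENNReal.ofReal (Real.exp (-m * t) * ‖Xhat 0 ω - X 0 ω‖ ^ 2) +
                ENNReal.ofReal (ε ^ 2 / m ^ 2 * (1 - Real.exp (-m * t))) :=
                ENNReal.ofReal_add_le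
            _ ≤ ENNReal.ofReal (Real.exp (-m * t)) *
                ENNReal.ofReal (‖Xhat 0 ω - X 0 ω‖ ^ 2) +
                ENNReal.ofReal (ε ^ 2 / m ^ 2) := by
                have hc0 : (0:ℝ) ≤ ε ^ 2 / m ^ 2 := by positivity
                refine add_le_add ?_ ?_
                · exact le_of_eq (ENNReal.ofReal_mul hexp0)
                · refine ENNReal.ofReal_le_ofReal ?_
                  nlinarith [mul_nonneg hc0 hexp0]
      _ = ENNReal.ofReal (Real.exp (-m * t)) * C + ENNReal.ofReal (ε ^ 2 / m ^ 2) := by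
          rw [lintegral_add_right' _ aemeasurable_const,
            lintegral_const_mul' _ _ ENNReal.ofReal_ne_top, lintegral_const,
            measure_univ, mul_one, hCdef]
  have htendexp : Filter.Tendsto (fun t : ℝ => Real.exp (-m * t)) Filter.atTop (nhds 0) := by
    have h1 : Filter.Tendsto (fun t : ℝ => -m * t) Filter.atTop Filter.atBot :=
      Filter.Tendsto.const_mul_atTop_of_neg (by linarith) Filter.tendsto_id
    exact Real.tendsto_exp_atBot.comp h1
  have htend : Filter.Tendsto
      (fun t : ℝ => ENNReal.ofReal (Real.exp (-m * t)) * C +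
        ENNReal.ofReal (ε ^ 2 / m ^ 2)) Filter.atTop
      (nhds (ENNReal.ofReal (ε ^ 2 / m ^ 2))) := by
    have h1 : Filter.Tendsto (fun t : ℝ => ENNReal.ofReal (Real.exp (-m * t)))
        Filter.atTop (nhds 0) := by
      have := (ENNReal.continuous_ofReal.tendsto 0).comp htendexp
      simpa [Function.comp_def] using this
    have h2 := ENNReal.Tendsto.mul_const h1 (Or.inr hCfin.ne)
    rw [zero_mul] at h2
    have h3 := h2.add (tendsto_const_nhds (x := ENNReal.ofReal (ε ^ 2 / m ^ 2))
      (f := Filter.atTop))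
    simpa using h3
  have hW2sq : W2sq μhat μ ≤ ENNReal.ofReal (ε ^ 2 / m ^ 2) :=
    ge_of_tendsto htend ((Filter.eventually_ge_atTop 0).mono fun t ht => hbound t ht)
  have h1 : (W2sq μhat μ).toReal ≤ ε ^ 2 / m ^ 2 :=
    ENNReal.toReal_le_of_le_ofReal (by positivity) hW2sq
  unfold W2
  calc Real.sqrt (W2sq μhat μ).toReal ≤ Real.sqrt (ε ^ 2 / m ^ 2) := Real.sqrt_le_sqrt h1
    _ = ε / m := by
        rw [← div_pow, Real.sqrt_sq (by positivity)]
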